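/- arXiv:1607.08150 — 2 statements merged into one kernel-verified Lean document; each statement's English description precedes it below -/
import Mathlib

section
/- Let p, q ≥ 1 be integers, ℓ ≥ 0, and α real with −ℓ ≤ α ≤ ℓ. Let τ, rβ, rγ be real numbers with 0 ≤ rβ, rγ ≤ min(p,q), satisfying −rβ·ℓ + α(rβ − 2pq/(p+q)) ≤ τ ≤ rγ·ℓ + α(rγ − 2pq/(p+q)). Then min(p,q)·(−α·|p−q|/(p+q) − ℓ) ≤ τ ≤ min(p,q)·(ℓ − α·|p−q|/(p+q)). -/
theorem toledo_bounds_ii (p q : ℕ) (hp : 1 ≤ p) (hq : 1 ≤ q) (ℓ α τ rβ rγ : ℝ)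
    (hℓ : 0 ≤ ℓ) (hα1 : -ℓ ≤ α) (hα2 : α ≤ ℓ)
    (hrβ0 : 0 ≤ rβ) (hrβ : rβ ≤ min p q) (hrγ0 : 0 ≤ rγ) (hrγ : rγ ≤ min p q)
    (hlow : -rβ * ℓ + α * (rβ - 2 * p * q / (p + q)) ≤ τ)
    (hhigh : τ ≤ rγ * ℓ + α * (rγ - 2 * p * q / (p + q))) :
    (min p q : ℝ) * (-α * |(p : ℝ) - q| / (p + q) - ℓ) ≤ τ ∧
    τ ≤ (min p q : ℝ) * (ℓ - α * |(p : ℝ) - q| / (p + q)) := by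
  have hs : (0:ℝ) < (p:ℝ) + q := by
    have : (1:ℝ) ≤ (p:ℝ) := by exact_mod_cast hp
    have : (1:ℝ) ≤ (q:ℝ) := by exact_mod_cast hq
    linarith [(by exact_mod_cast hp : (1:ℝ) ≤ (p:ℝ))]
  have hm : ((min p q : ℕ) : ℝ) = min (p:ℝ) (q:ℝ) := by push_cast; rfl
  set m : ℝ := min (p:ℝ) (q:ℝ) with hmdef
  have key : 2 * (p:ℝ) * q = m * ((p:ℝ) + q) + m * |(p : ℝ) - q| := by
    rcases le_total (p:ℝ) (q:ℝ) with h | h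
    · rw [hmdef, min_eq_left h, abs_of_nonpos (by linarith)]; ring
    · rw [hmdef, min_eq_right h, abs_of_nonneg (by linarith)]; ring
  have hkey : 2 * (p:ℝ) * q / ((p:ℝ) + q) = m + m * |(p : ℝ) - q| / ((p:ℝ) + q) := by
    field_simp
    linarith [key]
  have hrβ' : rβ ≤ m := hm ▸ hrβ
  have hrγ' : rγ ≤ m := hm ▸ hrγ
  have hd : m * (-α * |(p : ℝ) - q| / (p + q) - ℓ) =
      -(m * ℓ) - α * (m * |(p : ℝ) - q| / ((p:ℝ) + q)) := by ring
  have hd2 : m * (ℓ - α * |(p : ℝ) - q| / (p + q)) =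
      m * ℓ - α * (m * |(p : ℝ) - q| / ((p:ℝ) + q)) := by ring
  rw [hkey] at hlow hhigh
  constructor
  · rw [hd]
    nlinarith [mul_nonneg (sub_nonneg.2 hrβ') (sub_nonneg.2 hα2)]
  · rw [hd2]
    nlinarith [mul_nonneg (sub_nonneg.2 hrγ') (by linarith : (0:ℝ) ≤ ℓ + α)]
end

section
/- Let p, q ≥ 1 be integers, ℓ ≥ 0, α ≥ ℓ, and τ, rβ, rγ real with 0 ≤ rβ, rγ ≤ min(p,q), satisfying −rβ·ℓ + α(rβ − 2pq/(p+q)) ≤ τ ≤ rγ·ℓ + α(rγ − 2pq/(p+q)). Then −α·2pq/(p+q) ≤ τ ≤ min(p,q)·(ℓ − α·|p−q|/(p+q)). -/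
theorem toledo_bounds_iii (p q : ℕ) (hp : 1 ≤ p) (hq : 1 ≤ q) (ℓ α τ rβ rγ : ℝ)
    (hℓ : 0 ≤ ℓ) (hα : ℓ ≤ α)
    (hrβ0 : 0 ≤ rβ) (hrβ : rβ ≤ min p q) (hrγ0 : 0 ≤ rγ) (hrγ : rγ ≤ min p q)
    (hlow : -rβ * ℓ + α * (rβ - 2 * p * q / (p + q)) ≤ τ)
    (hhigh : τ ≤ rγ * ℓ + α * (rγ - 2 * p * q / (p + q))) :
    -α * (2 * p * q / (p + q)) ≤ τ ∧
    τ ≤ (min p q : ℝ) * (ℓ - α * |(p : ℝ) - q| / (p + q)) := by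
  have hp' : (1:ℝ) ≤ p := by exact_mod_cast hp
  have hq' : (1:ℝ) ≤ q := by exact_mod_cast hq
  have hpq : (0:ℝ) < (p:ℝ) + q := by linarith
  push_cast at hrβ hrγ ⊢
  have hD : 2*(p:ℝ)*q/((p:ℝ)+q)*((p:ℝ)+q) = 2*(p:ℝ)*q := div_mul_cancel₀ _ hpq.ne'
  have hh : τ*((p:ℝ)+q) ≤ (rγ*ℓ + α*rγ)*((p:ℝ)+q) - α*(2*(p:ℝ)*q) := by
    have h2 := mul_le_mul_of_nonneg_right hhigh hpq.le
    nlinarith [hD]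
  constructor
  · have h1 : 0 ≤ rβ * (α - ℓ) := mul_nonneg hrβ0 (by linarith)
    have h2 : α * (rβ - 2 * (p:ℝ) * q / ((p:ℝ) + q)) = α * rβ - α * (2 * (p:ℝ) * q / ((p:ℝ) + q)) := by ring
    nlinarith [hlow]
  · have hfac : 0 ≤ ((p:ℝ) ⊓ q - rγ) * (ℓ + α) * ((p:ℝ)+q) :=
      mul_nonneg (mul_nonneg (sub_nonneg.2 hrγ) (by linarith)) hpq.le
    rcases le_total (p:ℝ) q with h | h
    · rw [min_eq_left h] at hrγ hfac ⊢
      rw [abs_of_nonpos (by linarith : (p:ℝ) - q ≤ 0)]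
      have expand : (p:ℝ) * (ℓ - α * -((p:ℝ) - q) / ((p:ℝ) + q))
          = ((p:ℝ)*ℓ*((p:ℝ)+q) + (p:ℝ)*α*((p:ℝ)-q))/((p:ℝ)+q) := by
        field_simp; ring
      rw [expand, le_div_iff₀ hpq]
      nlinarith [hh, hfac]
    · rw [min_eq_right h] at hrγ hfac ⊢
      rw [abs_of_nonneg (by linarith : (0:ℝ) ≤ (p:ℝ) - q)]
      have expand : (q:ℝ) * (ℓ - α * ((p:ℝ) - q) / ((p:ℝ) + q))
          = ((q:ℝ)*ℓ*((p:ℝ)+q) - (q:ℝ)*α*((p:ℝ)-q))/((p:ℝ)+q) := by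
        field_simp
      rw [expand, le_div_iff₀ hpq]
      nlinarith [hh, hfac]
end
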